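/- Let G be a bipartite graph on n vertices with bipartition {V1, V2} where |V1| = |V2| = n/2, and suppose G contains no path with k edges. Then there exist X1 ⊆ V1 and X2 ⊆ V2 with |X1| = |X2| >= (n - k)/4 such that G has no edges between X1 and X2. -/

import Mathlib

open SimpleGraph

namespace MonoCyclePartitions

variable {V : Type*}

/-- `conCount H l x y` is the number of paths of length `l + 1` (equivalently, with `l`
internal vertices) between `x` and `y` in the graph `H`. -/
noncomputable def conCount (H : SimpleGraph V) (l : ℕ) (x y : V) : ℕ :=
  Nat.card {p : H.Walk x y // p.IsPath ∧ p.length = l + 1}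

/-- The bipartite graph consisting of the edges of `H` with one end in `X` and the other in `Y`. -/
def between (H : SimpleGraph V) (X Y : Set V) : SimpleGraph V where
  Adj u v := H.Adj u v ∧ ((u ∈ X ∧ v ∈ Y) ∨ (u ∈ Y ∧ v ∈ X))
  symm := ⟨fun u v h => ⟨h.1.symm, by tauto⟩⟩
  loopless := ⟨fun v h => H.loopless.irrefl v h.1⟩

/-- A subgraph `F` of a graph `G` on `n` vertices is `(α, k)`-strongly robust if there is a
positive integer `l ≤ k` such that every two vertices of `F` are joined by at least `α * n ^ l`
paths of length `l + 1` in `F`. -/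
def StronglyRobust [Fintype V] {G : SimpleGraph V} (F : G.Subgraph) (α : ℝ) (k : ℕ) : Prop :=
  ∃ l : ℕ, 1 ≤ l ∧ l ≤ k ∧ ∀ x ∈ F.verts, ∀ y ∈ F.verts,
    α * (Fintype.card V : ℝ) ^ l ≤ (conCount F.spanningCoe l x y : ℝ)

/-- `F` is `(α, k)`-weakly robust, witnessed by the bipartition `{X, Y}` of its vertex set. -/
def WeaklyRobustWith [Fintype V] {G : SimpleGraph V} (F : G.Subgraph) (X Y : Set V)
    (α : ℝ) (k : ℕ) : Prop :=
  X ∪ Y = F.verts ∧ Disjoint X Y ∧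
  ∃ l : ℕ, 1 ≤ l ∧ l ≤ k ∧ ∀ x ∈ X, ∀ y ∈ Y,
    α * (Fintype.card V : ℝ) ^ l ≤ (conCount (between F.spanningCoe X Y) l x y : ℝ)

def WeaklyRobust [Fintype V] {G : SimpleGraph V} (F : G.Subgraph) (α : ℝ) (k : ℕ) : Prop :=
  ∃ X Y : Set V, WeaklyRobustWith F X Y α k

def Robust [Fintype V] {G : SimpleGraph V} (F : G.Subgraph) (α : ℝ) (k : ℕ) : Prop :=
  StronglyRobust F α k ∨ WeaklyRobust F α k

/-- `F` is a subgraph of the graph `H` (as graphs on the same vertex type). -/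
def SubgraphOf {G : SimpleGraph V} (F : G.Subgraph) (H : SimpleGraph V) : Prop :=
  ∀ ⦃u v⦄, F.Adj u v → H.Adj u v

/-- The subgraph of `G` consisting of the edges of `H` (that lie in `G`) inside the set `S`;
when `H ≤ G` this is the graph `H` restricted to `S`, viewed as a subgraph of `G`. -/
def restrictSubgraph (G H : SimpleGraph V) (S : Set V) : G.Subgraph where
  verts := S
  Adj u v := H.Adj u v ∧ G.Adj u v ∧ u ∈ S ∧ v ∈ S
  adj_sub h := h.2.1
  edge_vert h := h.2.2.1
  symm := ⟨fun u v h => ⟨h.1.symm, h.2.1.symm, h.2.2.2, h.2.2.1⟩⟩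

/-- The graph `H` restricted to `S` has a Hamilton cycle, where by convention the empty set,
a single vertex and an edge count as (degenerate) cycles. -/
def HasDegenHamCycleOn [DecidableEq V] (H : SimpleGraph V) (S : Set V) : Prop :=
  S = ∅ ∨ (∃ v, S = {v}) ∨ (∃ u v, H.Adj u v ∧ S = {u, v}) ∨
    ∃ (x : S) (c : (H.induce S).Walk x x), c.IsHamiltonianCycle

/-- The vertex set can be partitioned into a cycle of `GR` and a cycle of `GB`
(allowing degenerate cycles). -/
def RedBlueCyclePartition [DecidableEq V] (GR GB : SimpleGraph V) : Prop :=
  ∃ VR VB : Set V, Disjoint VR VB ∧ VR ∪ VB = Set.univ ∧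
    HasDegenHamCycleOn GR VR ∧ HasDegenHamCycleOn GB VB

/-- The induced subgraph of `H` on `S` has a Hamilton path (with the convention that the
empty graph and one-vertex graphs have one). -/
def HasHamPathOn [DecidableEq V] (H : SimpleGraph V) (S : Set V) : Prop :=
  S = ∅ ∨ ∃ (a b : S) (p : (H.induce S).Walk a b), p.IsHamiltonian

/-- The number of neighbours of `v` in `A`, in the graph `H`. -/
noncomputable def degIn (H : SimpleGraph V) (v : V) (A : Set V) : ℕ :=
  (H.neighborSet v ∩ A).ncard

/-- The degree of `v` in the graph `H`. -/
noncomputable def deg (H : SimpleGraph V) (v : V) : ℕ :=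
  (H.neighborSet v).ncard

/-- The number of edges of `H` with one end in `A` and the other in `B`. -/
noncomputable def edgesBetween (H : SimpleGraph V) (A B : Set V) : ℕ :=
  {e ∈ H.edgeSet | ∃ u v, u ∈ A ∧ v ∈ B ∧ e = s(u, v)}.ncard

/-- The number of edges of `H` with both ends in `A`. -/
noncomputable def edgesWithin (H : SimpleGraph V) (A : Set V) : ℕ :=
  {e ∈ H.edgeSet | ∀ v ∈ e, v ∈ A}.ncard

/-- `A` is an independent set of `H`. -/
def IsIndep (H : SimpleGraph V) (A : Set V) : Prop :=
  ∀ u ∈ A, ∀ v ∈ A, ¬ H.Adj u v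

/-- The set of vertices with a neighbour in `A`. -/
def NSet (H : SimpleGraph V) (A : Set V) : Set V :=
  {v | ∃ u ∈ A, H.Adj u v}

/-- `H` is 2-connected: it is connected, has at least 3 vertices, and stays connected after
deleting any single vertex. -/
def TwoConnected [Fintype V] (H : SimpleGraph V) : Prop :=
  H.Connected ∧ 3 ≤ Fintype.card V ∧ ∀ v : V, (H.induce ({v}ᶜ : Set V)).Connected


private lemma walk_of_chain {W : Type*} {G : SimpleGraph W} :
    ∀ (l : List W) (x : W), List.Chain' G.Adj (x :: l) →
      ∃ (y : W) (p : G.Walk x y), p.support = x :: l := by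
  intro l
  induction l with
  | nil => exact fun x _ => ⟨x, Walk.nil, rfl⟩
  | cons y ys ih =>
    intro x hc
    rw [List.Chain', List.isChain_cons_cons] at hc
    obtain ⟨z, p, hp⟩ := ih y hc.2
    exact ⟨z, Walk.cons hc.1 p, by simp [hp]⟩

private lemma path_len_lt {W : Type*} {G : SimpleGraph W} {k : ℕ} (hk : 1 ≤ k)
    (hnopath : ¬ ∃ (a b : W) (p : G.Walk a b), p.IsPath ∧ p.length = k) :
    ∀ {a b : W} (p : G.Walk a b), p.IsPath → p.length < k := by
  intro a b p
  induction p with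
  | nil => exact fun _ => hk
  | cons h q ih =>
    intro hp
    have hq := ih hp.of_cons
    rcases Nat.lt_or_ge (q.length + 1) k with h' | h'
    · simpa using h'
    · exact absurd ⟨_, _, Walk.cons h q, hp, by rw [Walk.length_cons]; omega⟩ hnopath

private lemma altCount {W : Type*} [DecidableEq W] {G : SimpleGraph W}
    (F1 F2 : Finset W)
    (hd : ∀ x ∈ F1, x ∉ F2)
    (hb : ∀ u v, G.Adj u v → (u ∈ F1 ∧ v ∈ F2) ∨ (u ∈ F2 ∧ v ∈ F1)) :
    ∀ (l : List W) (x : W), List.Chain' G.Adj (x :: l) → (x :: l).Nodup →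
      (x ∈ F1 → ((x :: l).toFinset ∩ F2).card ≤ (l.length + 1) / 2) ∧
      (x ∈ F2 → ((x :: l).toFinset ∩ F2).card ≤ (l.length + 2) / 2) := by
  intro l
  induction l with
  | nil =>
    intro x _ _
    constructor
    · intro hx
      have he : (({x} : Finset W) ∩ F2) = ∅ := by
        ext y
        simp only [Finset.mem_inter, Finset.mem_singleton, Finset.notMem_empty, iff_false,
          not_and]
        rintro rfl
        exact hd _ hx
      simp [he]
    · intro _
      have h1 : (({x} : Finset W) ∩ F2).card ≤ ({x} : Finset W).card :=
        Finset.card_le_card Finset.inter_subset_left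
      simp only [Finset.card_singleton] at h1
      simp only [List.toFinset_cons, List.toFinset_nil, LawfulSingleton.insert_empty_eq, List.length_nil]
      omega
  | cons y ys ih =>
    intro x hc hnd
    rw [List.Chain', List.isChain_cons_cons] at hc
    have hy := ih y hc.2 hnd.of_cons
    have hxy := hb x y hc.1
    have hins : (x :: y :: ys).toFinset = insert x ((y :: ys).toFinset) := by simp
    constructor
    · intro hx
      have hy2 : y ∈ F2 := by
        rcases hxy with ⟨_, h⟩ | ⟨h, _⟩
        · exact h
        · exact absurd h (hd x hx)
      have hxnot : x ∉ F2 := hd x hx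
      have heq : (x :: y :: ys).toFinset ∩ F2 = (y :: ys).toFinset ∩ F2 := by
        rw [hins, Finset.insert_inter_of_notMem hxnot]
      rw [heq]
      have := hy.2 hy2
      simp only [List.length_cons] at this ⊢
      omega
    · intro hx
      have hy1 : y ∈ F1 := by
        rcases hxy with ⟨h, _⟩ | ⟨_, h⟩
        · exact absurd hx (hd x h)
        · exact h
      have hxny : x ∉ (y :: ys).toFinset := by
        rw [List.mem_toFinset]
        exact (List.nodup_cons.mp hnd).1
      have heq : (x :: y :: ys).toFinset ∩ F2 = insert x ((y :: ys).toFinset ∩ F2) := by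
        rw [hins, Finset.insert_inter_of_mem hx]
      rw [heq, Finset.card_insert_of_notMem (fun h => hxny (Finset.mem_inter.mp h).1)]
      have hcnt : ((y :: ys).toFinset ∩ F2).card ≤ (ys.length + 1) / 2 := hy.1 hy1
      simp only [List.length_cons]
      omega

private lemma dfs_main {n k : ℕ} (G : SimpleGraph (Fin n)) (F1 F2 : Finset (Fin n))
    (hd12 : ∀ x ∈ F1, x ∉ F2) (hcov : ∀ x, x ∈ F1 ∨ x ∈ F2)
    (hbal : F1.card = F2.card) (hsum : F1.card + F2.card = n)
    (hbip : ∀ u v, G.Adj u v → (u ∈ F1 ∧ v ∈ F2) ∨ (u ∈ F2 ∧ v ∈ F1))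
    (hk : 1 ≤ k) (hkn : k < n)
    (hnopath : ¬ ∃ (a b : Fin n) (p : G.Walk a b), p.IsPath ∧ p.length = k) :
    ∀ (m : ℕ) (S : Finset (Fin n)) (l : List (Fin n)),
      List.Chain' G.Adj l → l.Nodup → (∀ x ∈ l, x ∉ S) →
      (∀ x ∈ S, ∀ y, G.Adj x y → y ∈ S ∨ y ∈ l) →
      (S ∩ F1).card < (n - k + 3) / 4 → (S ∩ F2).card < (n - k + 3) / 4 →
      2 * (Finset.univ \ (S ∪ l.toFinset)).card + l.length ≤ m →
      ∃ X1 X2 : Finset (Fin n), X1 ⊆ F1 ∧ X2 ⊆ F2 ∧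
        X1.card = (n - k + 3) / 4 ∧ X2.card = (n - k + 3) / 4 ∧
        ∀ u ∈ X1, ∀ v ∈ X2, ¬ G.Adj u v := by
  classical
  have hd21 : ∀ x ∈ F2, x ∉ F1 := fun x hx h => hd12 x h hx
  have hbip' : ∀ u v, G.Adj u v → (u ∈ F2 ∧ v ∈ F1) ∨ (u ∈ F1 ∧ v ∈ F2) :=
    fun u v h => (hbip u v h).symm
  -- card of the unexplored set
  have hTcard : ∀ (S : Finset (Fin n)) (l : List (Fin n)), l.Nodup → (∀ x ∈ l, x ∉ S) →
      (Finset.univ \ (S ∪ l.toFinset)).card + (S.card + l.length) = n := by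
    intro S l hnd hdisj
    have hdis : Disjoint S l.toFinset :=
      Finset.disjoint_right.mpr fun a ha => hdisj a (List.mem_toFinset.mp ha)
    have h1 : (S ∪ l.toFinset).card = S.card + l.length := by
      rw [Finset.card_union_of_disjoint hdis, List.toFinset_card_of_nodup hnd]
    have h2 : (S ∪ l.toFinset).card ≤ Finset.univ.card :=
      Finset.card_le_card (Finset.subset_univ _)
    rw [Finset.card_sdiff_of_subset (Finset.subset_univ _)]
    simp only [Finset.card_univ, Fintype.card_fin] at *
    omega
  -- contradiction when everything is explored
  have hfull : ∀ S : Finset (Fin n),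
      (Finset.univ \ (S ∪ (List.nil : List (Fin n)).toFinset)).card = 0 →
      (S ∩ F1).card < (n - k + 3) / 4 → False := by
    intro S hT hs1
    have hUS : Finset.univ \ S = ∅ := by
      have : Finset.univ \ (S ∪ (List.nil : List (Fin n)).toFinset) = Finset.univ \ S := by
        simp
      rw [this] at hT
      exact Finset.card_eq_zero.mp hT
    have hsub : F1 ⊆ S := fun x _ => by
      by_contra hxS
      have : x ∈ Finset.univ \ S := Finset.mem_sdiff.mpr ⟨Finset.mem_univ x, hxS⟩
      simp [hUS] at this
    rw [Finset.inter_eq_right.mpr hsub] at hs1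
    omega
  intro m
  induction m with
  | zero =>
    intro S l _ hnodup hdisj _ hs1 _ hm
    exfalso
    have hl0 : l.length = 0 := by omega
    have hT0 : (Finset.univ \ (S ∪ l.toFinset)).card = 0 := by omega
    rw [List.length_eq_zero_iff] at hl0
    subst hl0
    exact hfull S hT0 hs1
  | succ m ih =>
    intro S l hchain hnodup hdisj hclosed hs1 hs2 hm
    cases l with
    | nil =>
      by_cases hT : (Finset.univ \ (S ∪ (List.nil : List (Fin n)).toFinset)).card = 0
      · exact absurd hs1 (fun h => hfull S hT h)
      · obtain ⟨v, hv⟩ := Finset.card_pos.mp (Nat.pos_of_ne_zero hT)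
        have hvS : v ∉ S := by
          have := (Finset.mem_sdiff.mp hv).2
          simp at this
          exact this
        have hnd' : ([v] : List (Fin n)).Nodup := by simp
        have hdisj' : ∀ x ∈ [v], x ∉ S := by
          intro x hx
          simp at hx
          subst hx
          exact hvS
        refine ih S [v] (List.isChain_singleton v) hnd' hdisj' ?_ hs1 hs2 ?_
        · intro x hx y hxy
          rcases hclosed x hx y hxy with h | h
          · exact Or.inl h
          · simp at h
        · have h1 := hTcard S [v] hnd' hdisj'
          have h2 := hTcard S [] (by simp) (by simp)
          simp only [List.length_cons, List.length_nil] at *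
          omega
    | cons v rest =>
      by_cases hex : ∃ u, u ∈ Finset.univ \ (S ∪ (v :: rest).toFinset) ∧ G.Adj v u
      · -- push
        obtain ⟨u, huT, hadj⟩ := hex
        have huT2 := (Finset.mem_sdiff.mp huT).2
        simp only [Finset.mem_union, List.mem_toFinset, not_or] at huT2
        have huS : u ∉ S := huT2.1
        have hul : u ∉ (v :: rest) := huT2.2
        have hnd' : (u :: v :: rest).Nodup := List.nodup_cons.mpr ⟨hul, hnodup⟩
        have hdisj' : ∀ x ∈ (u :: v :: rest), x ∉ S := by
          intro x hx
          rcases List.mem_cons.mp hx with rfl | hx'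
          · exact huS
          · exact hdisj x hx'
        refine ih S (u :: v :: rest) (List.isChain_cons_cons.mpr ⟨hadj.symm, hchain⟩) hnd' hdisj'
          (fun x hx y hxy => (hclosed x hx y hxy).imp id (List.mem_cons_of_mem u)) hs1 hs2 ?_
        have h1 := hTcard S (u :: v :: rest) hnd' hdisj'
        have h2 := hTcard S (v :: rest) hnodup hdisj
        have hupos : 0 < (Finset.univ \ (S ∪ (v :: rest).toFinset)).card :=
          Finset.card_pos.mpr ⟨u, huT⟩
        simp only [List.length_cons] at *
        omega
      · -- pop
        push_neg at hex
        have hvS : v ∉ S := hdisj v (List.mem_cons_self)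
        have hvrest : v ∉ rest := (List.nodup_cons.mp hnodup).1
        have hclosed' : ∀ x ∈ insert v S, ∀ y, G.Adj x y → y ∈ insert v S ∨ y ∈ rest := by
          intro x hx y hxy
          by_cases hyS : y ∈ S
          · exact Or.inl (Finset.mem_insert_of_mem hyS)
          rcases Finset.mem_insert.mp hx with hxv | hxS
          · by_cases hyl : y ∈ (v :: rest)
            · rcases List.mem_cons.mp hyl with hyv | hyr
              · exact absurd hxy (by rw [hxv, hyv]; exact G.loopless.irrefl v)
              · exact Or.inr hyr
            · refine absurd hxy ?_
              rw [hxv]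
              exact hex y (Finset.mem_sdiff.mpr ⟨Finset.mem_univ y, by
                simp only [Finset.mem_union, List.mem_toFinset]
                tauto⟩)
          · rcases hclosed x hxS y hxy with hyS' | hyl
            · exact Or.inl (Finset.mem_insert_of_mem hyS')
            · rcases List.mem_cons.mp hyl with hyv | hyr
              · exact Or.inl (by rw [hyv]; exact Finset.mem_insert_self v S)
              · exact Or.inr hyr
        have hdisj' : ∀ x ∈ rest, x ∉ insert v S := by
          intro x hx h
          rcases Finset.mem_insert.mp h with rfl | hxS
          · exact hvrest hx
          · exact hdisj x (List.mem_cons_of_mem v hx) hxS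
        have hScard : (insert v S).card = S.card + 1 := Finset.card_insert_of_notMem hvS
        have hmeasure : 2 * (Finset.univ \ (insert v S ∪ rest.toFinset)).card + rest.length
            ≤ m := by
          have h1 := hTcard (insert v S) rest hnodup.of_cons hdisj'
          have h2 := hTcard S (v :: rest) hnodup hdisj
          simp only [List.length_cons] at *
          omega
        -- length of the stack
        have hlenk : rest.length + 1 ≤ k := by
          obtain ⟨y, p, hp⟩ := walk_of_chain (rest) v hchain
          have hpath : p.IsPath := by
            rw [Walk.isPath_def, hp]
            exact hnodup
          have hlt := path_len_lt hk hnopath p hpath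
          have : p.support.length = p.length + 1 := Walk.length_support p
          rw [hp] at this
          simp only [List.length_cons] at this
          omega
        rcases hcov v with hv1 | hv2
        · -- v ∈ F1
          have hv2' : v ∉ F2 := hd12 v hv1
          have hS2eq : insert v S ∩ F2 = S ∩ F2 := Finset.insert_inter_of_notMem hv2'
          by_cases hlt : (insert v S ∩ F1).card < (n - k + 3) / 4
          · exact ih (insert v S) rest (List.IsChain.tail hchain) hnodup.of_cons hdisj' hclosed' hlt
              (by rw [hS2eq]; exact hs2) hmeasure
          · -- stop: found the sets
            have hQ1 : (insert v S ∩ F1).card = (n - k + 3) / 4 := by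
              have he1 : insert v S ∩ F1 = insert v (S ∩ F1) := Finset.insert_inter_of_mem hv1
              have := Finset.card_insert_le v (S ∩ F1)
              rw [he1] at hlt ⊢
              omega
            set T := Finset.univ \ (S ∪ (v :: rest).toFinset) with hTdef
            have hsubF2 : F2 ⊆ (S ∩ F2) ∪ ((v :: rest).toFinset ∩ F2) ∪ (T ∩ F2) := by
              intro x hx
              simp only [hTdef, Finset.mem_union, Finset.mem_inter, Finset.mem_sdiff,
                Finset.mem_univ, true_and]
              tauto
            have hF2le : F2.card ≤ (S ∩ F2).card + ((v :: rest).toFinset ∩ F2).card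
                + (T ∩ F2).card := by
              calc F2.card ≤ ((S ∩ F2) ∪ ((v :: rest).toFinset ∩ F2) ∪ (T ∩ F2)).card :=
                    Finset.card_le_card hsubF2
                _ ≤ ((S ∩ F2) ∪ ((v :: rest).toFinset ∩ F2)).card + (T ∩ F2).card :=
                    Finset.card_union_le _ _
                _ ≤ (S ∩ F2).card + ((v :: rest).toFinset ∩ F2).card + (T ∩ F2).card :=
                    Nat.add_le_add_right (Finset.card_union_le _ _) _
            have halt : ((v :: rest).toFinset ∩ F2).card ≤ (rest.length + 1) / 2 :=
              (altCount F1 F2 hd12 hbip rest v hchain hnodup).1 hv1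
            have haltk : ((v :: rest).toFinset ∩ F2).card ≤ k / 2 :=
              le_trans halt (Nat.div_le_div_right hlenk)
            have hTF2 : (n - k + 3) / 4 ≤ (T ∩ F2).card := by omega
            obtain ⟨X2, hX2sub, hX2card⟩ := Finset.exists_subset_card_eq hTF2
            refine ⟨insert v S ∩ F1, X2, Finset.inter_subset_right,
              le_trans hX2sub Finset.inter_subset_right, hQ1, hX2card, ?_⟩
            intro a ha b hb hab
            have haS : a ∈ insert v S := (Finset.mem_inter.mp ha).1
            have hbT : b ∈ T := (Finset.mem_inter.mp (hX2sub hb)).1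
            have hbT' := (Finset.mem_sdiff.mp hbT).2
            simp only [Finset.mem_union, List.mem_toFinset, not_or] at hbT'
            rcases hclosed' a haS b hab with hbS | hbr
            · rcases Finset.mem_insert.mp hbS with rfl | hbS'
              · exact hbT'.2 (List.mem_cons_self)
              · exact hbT'.1 hbS'
            · exact hbT'.2 (List.mem_cons_of_mem v hbr)
        · -- v ∈ F2
          have hv1' : v ∉ F1 := hd21 v hv2
          have hS1eq : insert v S ∩ F1 = S ∩ F1 := Finset.insert_inter_of_notMem hv1'
          by_cases hlt : (insert v S ∩ F2).card < (n - k + 3) / 4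
          · exact ih (insert v S) rest (List.IsChain.tail hchain) hnodup.of_cons hdisj' hclosed'
              (by rw [hS1eq]; exact hs1) hlt hmeasure
          · have hQ2 : (insert v S ∩ F2).card = (n - k + 3) / 4 := by
              have he1 : insert v S ∩ F2 = insert v (S ∩ F2) := Finset.insert_inter_of_mem hv2
              have := Finset.card_insert_le v (S ∩ F2)
              rw [he1] at hlt ⊢
              omega
            set T := Finset.univ \ (S ∪ (v :: rest).toFinset) with hTdef
            have hsubF1 : F1 ⊆ (S ∩ F1) ∪ ((v :: rest).toFinset ∩ F1) ∪ (T ∩ F1) := by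
              intro x hx
              simp only [hTdef, Finset.mem_union, Finset.mem_inter, Finset.mem_sdiff,
                Finset.mem_univ, true_and]
              tauto
            have hF1le : F1.card ≤ (S ∩ F1).card + ((v :: rest).toFinset ∩ F1).card
                + (T ∩ F1).card := by
              calc F1.card ≤ ((S ∩ F1) ∪ ((v :: rest).toFinset ∩ F1) ∪ (T ∩ F1)).card :=
                    Finset.card_le_card hsubF1
                _ ≤ ((S ∩ F1) ∪ ((v :: rest).toFinset ∩ F1)).card + (T ∩ F1).card :=
                    Finset.card_union_le _ _
                _ ≤ (S ∩ F1).card + ((v :: rest).toFinset ∩ F1).card + (T ∩ F1).card :=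
                    Nat.add_le_add_right (Finset.card_union_le _ _) _
            have halt : ((v :: rest).toFinset ∩ F1).card ≤ (rest.length + 1) / 2 :=
              (altCount F2 F1 hd21 hbip' rest v hchain hnodup).1 hv2
            have haltk : ((v :: rest).toFinset ∩ F1).card ≤ k / 2 :=
              le_trans halt (Nat.div_le_div_right hlenk)
            have hTF1 : (n - k + 3) / 4 ≤ (T ∩ F1).card := by omega
            obtain ⟨X1, hX1sub, hX1card⟩ := Finset.exists_subset_card_eq hTF1
            refine ⟨X1, insert v S ∩ F2, le_trans hX1sub Finset.inter_subset_right,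
              Finset.inter_subset_right, hX1card, hQ2, ?_⟩
            intro a ha b hb hab
            have hbS : b ∈ insert v S := (Finset.mem_inter.mp hb).1
            have haT : a ∈ T := (Finset.mem_inter.mp (hX1sub ha)).1
            have haT' := (Finset.mem_sdiff.mp haT).2
            simp only [Finset.mem_union, List.mem_toFinset, not_or] at haT'
            rcases hclosed' b hbS a hab.symm with haS | har
            · rcases Finset.mem_insert.mp haS with rfl | haS'
              · exact haT'.2 (List.mem_cons_self)
              · exact haT'.1 haS'
            · exact haT'.2 (List.mem_cons_of_mem v har)

theorem statement_6 (n k : ℕ) (G : SimpleGraph (Fin n)) (V1 V2 : Set (Fin n))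
    (hdisj : Disjoint V1 V2) (hcover : V1 ∪ V2 = Set.univ) (hbal : V1.ncard = V2.ncard)
    (hbip : ∀ u v, G.Adj u v → (u ∈ V1 ∧ v ∈ V2) ∨ (u ∈ V2 ∧ v ∈ V1))
    (hnopath : ¬ ∃ (a b : Fin n) (p : G.Walk a b), p.IsPath ∧ p.length = k) :
    ∃ X1 ⊆ V1, ∃ X2 ⊆ V2, X1.ncard = X2.ncard ∧
      ((n : ℝ) - k) / 4 ≤ (X1.ncard : ℝ) ∧
      ∀ u ∈ X1, ∀ v ∈ X2, ¬ G.Adj u v := by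
  classical
  rcases le_or_gt n k with hnk | hkn
  · -- trivial case: (n - k)/4 ≤ 0
    refine ⟨∅, Set.empty_subset _, ∅, Set.empty_subset _, rfl, ?_, by simp⟩
    have h : (n : ℝ) ≤ k := by exact_mod_cast hnk
    simp only [Set.ncard_empty, Nat.cast_zero]
    linarith
  · have hk : 1 ≤ k := by
      by_contra hk0
      have hk0' : k = 0 := by omega
      have hn0 : 0 < n := by omega
      exact hnopath ⟨⟨0, hn0⟩, ⟨0, hn0⟩, Walk.nil, Walk.IsPath.nil, by simp [hk0']⟩
    set F1 := V1.toFinset with hF1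
    set F2 := V2.toFinset with hF2
    have hd12 : ∀ x ∈ F1, x ∉ F2 := by
      intro x hx hx2
      rw [hF1, Set.mem_toFinset] at hx
      rw [hF2, Set.mem_toFinset] at hx2
      exact Set.disjoint_left.mp hdisj hx hx2
    have hcov : ∀ x, x ∈ F1 ∨ x ∈ F2 := by
      intro x
      have : x ∈ V1 ∪ V2 := hcover ▸ Set.mem_univ x
      rcases this with h | h
      · exact Or.inl (by rw [hF1, Set.mem_toFinset]; exact h)
      · exact Or.inr (by rw [hF2, Set.mem_toFinset]; exact h)
    have hbalF : F1.card = F2.card := by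
      rw [hF1, hF2, ← Set.ncard_eq_toFinset_card', ← Set.ncard_eq_toFinset_card']
      exact hbal
    have hsum : F1.card + F2.card = n := by
      have hdisjF : Disjoint F1 F2 := Finset.disjoint_left.mpr hd12
      have huniv : F1 ∪ F2 = Finset.univ := by
        ext x
        simp only [Finset.mem_union, Finset.mem_univ, iff_true]
        exact hcov x
      calc F1.card + F2.card = (F1 ∪ F2).card := (Finset.card_union_of_disjoint hdisjF).symm
        _ = n := by rw [huniv, Finset.card_univ, Fintype.card_fin]
    have hbipF : ∀ u v, G.Adj u v → (u ∈ F1 ∧ v ∈ F2) ∨ (u ∈ F2 ∧ v ∈ F1) := by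
      intro u v h
      rcases hbip u v h with ⟨h1, h2⟩ | ⟨h1, h2⟩
      · exact Or.inl ⟨Set.mem_toFinset.mpr h1, Set.mem_toFinset.mpr h2⟩
      · exact Or.inr ⟨Set.mem_toFinset.mpr h1, Set.mem_toFinset.mpr h2⟩
    obtain ⟨X1, X2, hX1F, hX2F, hc1, hc2, hne⟩ :=
      dfs_main G F1 F2 hd12 hcov hbalF hsum hbipF hk hkn hnopath (2 * n) ∅ []
        List.isChain_nil (by simp) (by simp) (by simp)
        (by simp only [Finset.empty_inter, Finset.card_empty]; omega)
        (by simp only [Finset.empty_inter, Finset.card_empty]; omega)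
        (by simp)
    refine ⟨(X1 : Set (Fin n)), ?_, (X2 : Set (Fin n)), ?_, ?_, ?_, ?_⟩
    · intro x hx
      exact Set.mem_toFinset.mp (hX1F hx)
    · intro x hx
      exact Set.mem_toFinset.mp (hX2F hx)
    · rw [Set.ncard_coe_finset, Set.ncard_coe_finset, hc1, hc2]
    · rw [Set.ncard_coe_finset, hc1]
      have h4 : n ≤ 4 * ((n - k + 3) / 4) + k := by omega
      have h4' : (n : ℝ) ≤ 4 * ((n - k + 3) / 4 : ℕ) + k := by exact_mod_cast h4
      linarith
    · intro u hu w hw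
      exact hne u hu w hw

end MonoCyclePartitions
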